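/- For every i, j ∈ {0,…,n}, the image of F_i under σ̄^j equals F_{max{0, i−j}}, that is, σ̄^j(F_i) = F_{max{0,i−j}}. -/

import Mathlib

/-- A Ferrers diagram of order `n`, given by its column heights
`c 0 ≤ c 1 ≤ … ≤ c (n-1) ≤ n` (so `c j` is the number of dots in the (j+1)-st column). -/
def IsFerrersDiagram (n : ℕ) (c : Fin n → ℕ) : Prop :=
  Monotone c ∧ ∀ i, c i ≤ n

/-- Extension of the column-height function to `ℕ`, by zero. -/
def colExt (n : ℕ) (c : Fin n → ℕ) : ℕ → ℕ :=
  fun k => if h : k < n then c ⟨k, h⟩ else 0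

/-- `ν_j(D,d) = Σ_{i=1}^{n-j} max{0, c_i - d + 1 + j}` (truncated subtraction gives the max). -/
def nuJ (n d j : ℕ) (c : Fin n → ℕ) : ℕ :=
  ∑ i ∈ Finset.range (n - j), (colExt n c i + 1 + j - d)

/-- `ν_min(D,d) = min{ν_j(D,d) : 0 ≤ j ≤ d-1}`. -/
noncomputable def nuMin (n d : ℕ) (c : Fin n → ℕ) : ℕ :=
  sInf {k | ∃ j < d, k = nuJ n d j c}

/-- A Ferrers diagram is monotone if `c (i+1) > c i` whenever `0 < c i < n`. -/
def DiagMonotone (n : ℕ) (c : Fin n → ℕ) : Prop :=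
  ∀ i : Fin n, ∀ hi : (i : ℕ) + 1 < n, 0 < c i → c i < n → c i < c ⟨(i : ℕ) + 1, hi⟩

/-- A Ferrers diagram is convex if `c (i+1) - c i ≤ 1` for all `i`. -/
def DiagConvex (n : ℕ) (c : Fin n → ℕ) : Prop :=
  ∀ i : Fin n, ∀ hi : (i : ℕ) + 1 < n, c ⟨(i : ℕ) + 1, hi⟩ ≤ c i + 1

/-- A Ferrers diagram is strictly monotone if `c (i+1) > c i` whenever `c i > 0`. -/
def DiagStrictlyMonotone (n : ℕ) (c : Fin n → ℕ) : Prop :=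
  ∀ i : Fin n, ∀ hi : (i : ℕ) + 1 < n, 0 < c i → c i < c ⟨(i : ℕ) + 1, hi⟩

/-- A Ferrers diagram is initially convex if `c 1 ≤ 1` and `c (i+1) - c i ≤ 1` for all `i`. -/
def DiagInitiallyConvex (n : ℕ) (c : Fin n → ℕ) : Prop :=
  (∀ h : 0 < n, c ⟨0, h⟩ ≤ 1) ∧ DiagConvex n c

/-- `h` is an admissible `p`-height for the Ferrers diagram `c`: `p^h ∣ n`, `p^h ∣ c i` for
all `i`, and `c (n-r) = c (n-s)` (1-indexed) whenever `r, s` lie in the same block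
`{Q p^h, …, (Q+1) p^h - 1}`. -/
def HeightOK (p n h : ℕ) (c : Fin n → ℕ) : Prop :=
  p ^ h ∣ n ∧ (∀ i, p ^ h ∣ c i) ∧
    ∀ r s : Fin n, (r : ℕ) / p ^ h = (s : ℕ) / p ^ h →
      c ⟨n - 1 - (r : ℕ), by have := r.isLt; omega⟩ =
        c ⟨n - 1 - (s : ℕ), by have := s.isLt; omega⟩

/-- The `p`-height of a Ferrers diagram: the largest admissible `h`. -/
noncomputable def pHeight (p n : ℕ) (c : Fin n → ℕ) : ℕ :=
  sSup {h | HeightOK p n h c}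

/-- The `p`-contraction of a Ferrers diagram: `c'_i = c_{p^h i} / p^h` (1-indexed),
a diagram of order `n / p^h`, where `h` is the `p`-height. -/
noncomputable def pContraction (p n : ℕ) (c : Fin n → ℕ) :
    Fin (n / p ^ pHeight p n c) → ℕ :=
  fun i => colExt n c (p ^ pHeight p n c * ((i : ℕ) + 1) - 1) / p ^ pHeight p n c

/-- A Ferrers diagram is `p`-monotone if its `p`-contraction is monotone. -/
def IsPMonotone (p n : ℕ) (c : Fin n → ℕ) : Prop :=
  DiagMonotone (n / p ^ pHeight p n c) (pContraction p n c)

/-- A Ferrers diagram is `p`-convex if its `p`-contraction is convex. -/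
def IsPConvex (p n : ℕ) (c : Fin n → ℕ) : Prop :=
  DiagConvex (n / p ^ pHeight p n c) (pContraction p n c)

/-- A Ferrers diagram is strictly `p`-monotone if its `p`-contraction is strictly monotone. -/
def IsStrictlyPMonotone (p n : ℕ) (c : Fin n → ℕ) : Prop :=
  DiagStrictlyMonotone (n / p ^ pHeight p n c) (pContraction p n c)

/-- A Ferrers diagram is initially `p`-convex if its `p`-contraction is initially convex. -/
def IsInitiallyPConvex (p n : ℕ) (c : Fin n → ℕ) : Prop :=
  DiagInitiallyConvex (n / p ^ pHeight p n c) (pContraction p n c)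

/-- The adjoint Ferrers diagram: column `j+1` of `D^⊤` has `#{i : c i ≥ n - j}` dots. -/
def adjointDiag (n : ℕ) (c : Fin n → ℕ) : Fin n → ℕ :=
  fun j => (Finset.univ.filter (fun i : Fin n => n - (j : ℕ) ≤ c i)).card

/-- `|D ∩ Δ_{i+1}^n|`: the number of dots of `D` on the (i+1)-st diagonal (0-indexed `i`). -/
def diagDots (n : ℕ) (c : Fin n → ℕ) (i : ℕ) : ℕ :=
  ((Finset.range n).filter (fun r => r + i < n ∧ r < colExt n c (r + i))).card

/-- The pair `(D, d)` is MDS-constructible if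
`ν_min(D,d) = Σ_{i=1}^n max{0, |D ∩ Δ_i^n| - d + 1}`. -/
def IsMDSConstructibleP (n d : ℕ) (c : Fin n → ℕ) : Prop :=
  nuMin n d c = ∑ i ∈ Finset.range n, (diagDots n c i + 1 - d)

/-- `σ̄ = σ - id`, as an `F`-linear endomorphism of `L`. -/
def sbar {F L : Type*} [Field F] [Field L] [Algebra F L] (σ : L ≃ₐ[F] L) :
    L →ₗ[F] L :=
  σ.toLinearMap - LinearMap.id

open FiniteDimensional Module LinearMap Submodule in
-- general linear algebra lemma
theorem key {F V : Type*} [Field F] [AddCommGroup V] [Module F V] [FiniteDimensional F V]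
    (N : V →ₗ[F] V) (n : ℕ) (hn : Module.finrank F V = n) (hN : N ^ n = 0)
    (hker : Module.finrank F (LinearMap.ker N) = 1) (i j : ℕ) (hi : i ≤ n) :
    Submodule.map (N ^ j) (LinearMap.ker (N ^ i)) = LinearMap.ker (N ^ (i - j)) := by
  -- monotonicity of kernels
  have hmono : ∀ k l, k ≤ l → LinearMap.ker (N ^ k) ≤ LinearMap.ker (N ^ l) := by
    intro k l hkl x hx
    have : N ^ l = N ^ (l - k) * N ^ k := by rw [← pow_add]; congr 1; omega
    rw [LinearMap.mem_ker] at hx ⊢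
    rw [this, Module.End.mul_apply, hx, map_zero]
  -- step: finrank ker N^(k+1) ≤ finrank ker N^k + 1
  have hstep : ∀ k, Module.finrank F (LinearMap.ker (N ^ (k + 1))) ≤
      Module.finrank F (LinearMap.ker (N ^ k)) + 1 := by
    intro k
    have hmaps : ∀ x ∈ LinearMap.ker (N ^ (k + 1)), N x ∈ LinearMap.ker (N ^ k) := by
      intro x hx
      rw [LinearMap.mem_ker] at hx ⊢
      rw [← Module.End.mul_apply, ← pow_succ]
      exact hx
    set g : LinearMap.ker (N ^ (k + 1)) →ₗ[F] LinearMap.ker (N ^ k) :=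
      N.restrict hmaps with hg
    have h1 := LinearMap.finrank_range_add_finrank_ker g
    have h2 : Module.finrank F (LinearMap.range g) ≤
        Module.finrank F (LinearMap.ker (N ^ k)) := Submodule.finrank_le _
    have h3 : Module.finrank F (LinearMap.ker g) ≤ 1 := by
      have e1 := Submodule.finrank_map_subtype_eq (LinearMap.ker (N ^ (k+1))) (LinearMap.ker g)
      have hle : Submodule.map (LinearMap.ker (N ^ (k+1))).subtype (LinearMap.ker g) ≤
          LinearMap.ker N := by
        rintro _ ⟨y, hy, rfl⟩
        have h4 : g y = 0 := hy
        exact congrArg Subtype.val h4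
      calc Module.finrank F (LinearMap.ker g)
          = Module.finrank F (Submodule.map (LinearMap.ker (N ^ (k+1))).subtype
            (LinearMap.ker g)) := e1.symm
        _ ≤ Module.finrank F (LinearMap.ker N) := Submodule.finrank_mono hle
        _ = 1 := hker
    omega
  -- finrank ker N^k ≤ k
  have hle : ∀ k, Module.finrank F (LinearMap.ker (N ^ k)) ≤ k := by
    intro k
    induction k with
    | zero => simp [pow_zero, LinearMap.ker_id, Module.End.one_eq_id]
    | succ k ih => have := hstep k; omega
  -- additivity bound
  have hadd : ∀ k t, Module.finrank F (LinearMap.ker (N ^ (k + t))) ≤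
      Module.finrank F (LinearMap.ker (N ^ k)) + t := by
    intro k t
    induction t with
    | zero => simp
    | succ t ih =>
      have := hstep (k + t)
      have h' : k + (t+1) = (k + t) + 1 := by omega
      rw [h']
      omega
  have htop : Module.finrank F (LinearMap.ker (N ^ n)) = n := by
    rw [hN, LinearMap.ker_zero, finrank_top, hn]
  -- exact dimension
  have hdim : ∀ k, k ≤ n → Module.finrank F (LinearMap.ker (N ^ k)) = k := by
    intro k hk
    have h1 := hadd k (n - k)
    rw [show k + (n - k) = n by omega, htop] at h1
    have := hle k
    omega
  by_cases hji : j ≤ i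
  · -- forward inclusion
    have hsub : Submodule.map (N ^ j) (LinearMap.ker (N ^ i)) ≤ LinearMap.ker (N ^ (i - j)) := by
      rintro _ ⟨x, hx, rfl⟩
      rw [LinearMap.mem_ker, ← Module.End.mul_apply, ← pow_add,
        show i - j + j = i by omega]
      exact hx
    refine Submodule.eq_of_le_of_finrank_le hsub ?_
    rw [hdim (i - j) (by omega)]
    -- compute dimension of the image
    set g : LinearMap.ker (N ^ i) →ₗ[F] V := (N ^ j).domRestrict (LinearMap.ker (N ^ i)) with hg
    have hrange : LinearMap.range g = Submodule.map (N ^ j) (LinearMap.ker (N ^ i)) := by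
      ext y
      simp [hg, LinearMap.mem_range, Submodule.mem_map]
    have h1 := LinearMap.finrank_range_add_finrank_ker g
    rw [hrange, hdim i hi] at h1
    have hkerg : Module.finrank F (LinearMap.ker g) = j := by
      rw [← Submodule.finrank_map_subtype_eq (LinearMap.ker (N ^ i)) (LinearMap.ker g)]
      have : Submodule.map (LinearMap.ker (N ^ i)).subtype (LinearMap.ker g)
          = LinearMap.ker (N ^ j) := by
        ext x
        constructor
        · rintro ⟨y, hy, rfl⟩
          exact hy
        · intro hx
          refine ⟨⟨x, hmono j i hji hx⟩, ?_, rfl⟩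
          exact hx
      rw [this, hdim j (by omega)]
    omega
  · -- j > i : both sides ⊥
    rw [show i - j = 0 by omega, pow_zero]
    have : LinearMap.ker (1 : V →ₗ[F] V) = ⊥ := by
      rw [Module.End.one_eq_id, LinearMap.ker_id]
    rw [this, Submodule.eq_bot_iff]
    rintro _ ⟨x, hx, rfl⟩
    have : N ^ j = N ^ (j - i) * N ^ i := by rw [← pow_add]; congr 1; omega
    rw [this, Module.End.mul_apply, hx, map_zero]

/-- for every `i, j ∈ {0,…,n}`, one has `σ̄^j(F_i) = F_{max{0, i-j}}`
(truncated subtraction on `ℕ` realizes the max). -/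
theorem statement3 {p m : ℕ} (hp : p.Prime) (hm : 1 ≤ m)
    {F L : Type*} [Field F] [Field L] [Algebra F L] [IsGalois F L] [FiniteDimensional F L]
    [CharP F p] (hn : Module.finrank F L = p ^ m)
    (σ : L ≃ₐ[F] L) (hσ : ∀ τ : L ≃ₐ[F] L, τ ∈ Subgroup.zpowers σ)
    (i j : ℕ) (hi : i ≤ p ^ m) (hj : j ≤ p ^ m) :
    Submodule.map (sbar σ ^ j) (LinearMap.ker (sbar σ ^ i)) =
      LinearMap.ker (sbar σ ^ (i - j)) := by
  have hFact : Fact p.Prime := ⟨hp⟩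
  set n := p ^ m with hn'
  -- CharP on the endomorphism ring
  have hchar : CharP (Module.End F L) p :=
    charP_of_injective_algebraMap (algebraMap F (Module.End F L)).injective p
  -- σ ^ n = 1
  letI := AlgEquiv.fintype F L
  have hcard : Fintype.card (L ≃ₐ[F] L) = n := by
    rw [← Nat.card_eq_fintype_card, IsGalois.card_aut_eq_finrank, hn]
  have hσn : σ ^ n = 1 := by rw [← hcard]; exact pow_card_eq_one
  -- nilpotency
  have hN : sbar σ ^ n = 0 := by
    have hcomm : Commute σ.toLinearMap (1 : Module.End F L) := Commute.one_right _
    have hsb : sbar σ = σ.toLinearMap - 1 := rfl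
    haveI := hchar
    rw [hsb, hn', sub_pow_char_pow_of_commute p m hcomm, one_pow,
      ← AlgEquiv.pow_toLinearMap, ← hn', hσn, AlgEquiv.one_toLinearMap]
    exact sub_self _
  -- kernel of sbar
  have hker : LinearMap.ker (sbar σ) = Submodule.span F {(1 : L)} := by
    have hfix : IntermediateField.fixedField (⊤ : Subgroup (L ≃ₐ[F] L)) = ⊥ :=
      ((IsGalois.tfae (F := F) (E := L)).out 0 1).mp (by infer_instance)
    ext x
    simp only [LinearMap.mem_ker, sbar, LinearMap.sub_apply, AlgEquiv.toLinearMap_apply,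
      LinearMap.id_apply, sub_eq_zero]
    constructor
    · intro hx
      have hz : ∀ k : ℕ, (σ ^ k) x = x := by
        intro k
        induction k with
        | zero => rfl
        | succ k ih => rw [pow_succ, AlgEquiv.mul_apply, hx, ih]
      have hxfix : x ∈ IntermediateField.fixedField (⊤ : Subgroup (L ≃ₐ[F] L)) := by
        intro g
        have hg : (g : L ≃ₐ[F] L) ∈ Submonoid.powers σ :=
          (mem_powers_iff_mem_zpowers).mpr (hσ (g : L ≃ₐ[F] L))
        obtain ⟨k, hk⟩ := hg
        show (g : L ≃ₐ[F] L) x = x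
        rw [← hk]; exact hz k
      rw [hfix, IntermediateField.mem_bot] at hxfix
      obtain ⟨c, rfl⟩ := hxfix
      rw [Submodule.mem_span_singleton]
      exact ⟨c, (Algebra.algebraMap_eq_smul_one c).symm⟩
    · rw [Submodule.mem_span_singleton]
      rintro ⟨c, rfl⟩
      rw [map_smul, map_one]
  have hker1 : Module.finrank F (LinearMap.ker (sbar σ)) = 1 := by
    rw [hker]; exact finrank_span_singleton one_ne_zero
  exact key (sbar σ) n hn hN hker1 i j hi
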